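/- A transitive frame F validates the scheme C_n if and only if F has circumference at most n and no strictly ascending chains. -/

import Mathlib

/-- Modal formulas: variables, ⊤, ¬, ∧, □. -/
inductive Fml : Type
  | var : ℕ → Fml
  | top : Fml
  | neg : Fml → Fml
  | and : Fml → Fml → Fml
  | box : Fml → Fml
deriving DecidableEq

namespace Fml
/-- Material implication, defined from ¬ and ∧. -/
def imp (φ ψ : Fml) : Fml := .neg (.and φ (.neg ψ))
/-- Disjunction. -/
def or (φ ψ : Fml) : Fml := .neg (.and (.neg φ) (.neg ψ))
/-- ◇φ := ¬□¬φ. -/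
def dia (φ : Fml) : Fml := .neg (.box (.neg φ))
/-- □*φ := φ ∧ □φ. -/
def boxs (φ : Fml) : Fml := .and φ (.box φ)
/-- ◇*φ := φ ∨ ◇φ. -/
def dias (φ : Fml) : Fml := Fml.or φ (dia φ)
end Fml

/-- Kripke satisfaction. -/
def sat {W : Type} (R : W → W → Prop) (V : ℕ → Set W) : W → Fml → Prop
  | x, .var p => x ∈ V p
  | _, .top => True
  | x, .neg φ => ¬ sat R V x φ
  | x, .and φ ψ => sat R V x φ ∧ sat R V x ψ
  | x, .box φ => ∀ y, R x y → sat R V y φ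

/-- P_n(φ0; φ1,...,φn): P_0(φ0) = ◇φ0, P_n(φ0,φ1,...,φn) = ◇(φ1 ∧ P_{n-1}(φ0,φ2,...,φn)). -/
def Pfml (φ0 : Fml) : List Fml → Fml
  | [] => φ0.dia
  | ψ :: rest => (Fml.and ψ (Pfml φ0 rest)).dia

/-- Conjunction of ¬(φ ∧ ψ) for ψ in the list. -/
def conjNeg (φ : Fml) : List Fml → Fml
  | [] => .top
  | ψ :: rest => .and (.neg (.and φ ψ)) (conjNeg φ rest)

/-- D_n: pairwise disjointness conjunction ⋀_{i<j} ¬(φ_i ∧ φ_j). -/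
def Dfml : List Fml → Fml
  | [] => .top
  | φ :: rest => .and (conjNeg φ rest) (Dfml rest)

/-- The scheme C_n instance on φ0,φ1,...,φn (φs = [φ1,...,φn]). -/
def Cfml (φ0 : Fml) (φs : List Fml) : Fml :=
  ((Dfml (φ0 :: φs)).boxs).imp ((φ0.dia).imp ((Fml.and φ0 (Fml.neg (Pfml φ0 φs))).dia))

/-- The scheme C_n* instance: as C_n but with ◇* in the consequent. -/
def CfmlStar (φ0 : Fml) (φs : List Fml) : Fml :=
  ((Dfml (φ0 :: φs)).boxs).imp ((φ0.dia).imp ((Fml.and φ0 (Fml.neg (Pfml φ0 φs))).dias))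

/-- An ascending R-chain. -/
def AscChain {W : Type} (R : W → W → Prop) (x : ℕ → W) : Prop := ∀ m, R (x m) (x (m+1))

/-- A strictly ascending R-chain. -/
def StrictAscChain {W : Type} (R : W → W → Prop) (x : ℕ → W) : Prop :=
  AscChain R x ∧ ∀ m, ¬ R (x (m+1)) (x m)

/-- The R-cluster of x. -/
def cluster {W : Type} (R : W → W → Prop) (x : W) : Set W := {y | x = y ∨ (R x y ∧ R y x)}

/-- The frame has a cycle of length k (k ≥ 1): k distinct points x_0 R x_1 R ... R x_{k-1} R x_0. -/
def HasCycle {W : Type} (R : W → W → Prop) (k : ℕ) : Prop :=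
  1 ≤ k ∧ ∃ x : ℕ → W, (∀ i j, i < k → j < k → x i = x j → i = j) ∧
    ∀ i < k, R (x i) (x ((i+1) % k))

/-- Circumference at most n: every cycle has length ≤ n. -/
def CircumLE {W : Type} (R : W → W → Prop) (n : ℕ) : Prop := ∀ k, HasCycle R k → k ≤ n

/-- The frame (W,R) validates the scheme C_n. -/
def ValidatesCn {W : Type} (R : W → W → Prop) (n : ℕ) : Prop :=
  ∀ (V : ℕ → Set W) (x : W) (φ0 : Fml) (φs : List Fml), φs.length = n →
    sat R V x (Cfml φ0 φs)

/-- A Boolean valuation on formulas (box-formulas and variables as atoms). -/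
def BoolEval (w : Fml → Bool) : Prop :=
  w .top = true ∧ (∀ φ, w (.neg φ) = !w φ) ∧ (∀ φ ψ, w (.and φ ψ) = (w φ && w ψ))

/-- Propositional tautologies. -/
def Tautology (φ : Fml) : Prop := ∀ w, BoolEval w → w φ = true

/-- Theorems of the smallest normal modal logic containing the axiom set Ax. -/
inductive Prov (Ax : Set Fml) : Fml → Prop
  | taut {φ} : Tautology φ → Prov Ax φ
  | kax (φ ψ) : Prov Ax ((Fml.box (φ.imp ψ)).imp ((Fml.box φ).imp (Fml.box ψ)))
  | ax {φ} : φ ∈ Ax → Prov Ax φ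
  | mp {φ ψ} : Prov Ax (φ.imp ψ) → Prov Ax φ → Prov Ax ψ
  | nec {φ} : Prov Ax φ → Prov Ax (.box φ)

/-- All instances of the transitivity scheme 4. -/
def Ax4 : Set Fml := {χ | ∃ φ, χ = (Fml.box φ).imp (Fml.box (Fml.box φ))}

/-- Axioms of K4C_n: scheme 4 together with all instances of scheme C_n. -/
def AxK4C (n : ℕ) : Set Fml :=
  Ax4 ∪ {χ | ∃ (φ0 : Fml) (φs : List Fml), φs.length = n ∧ χ = Cfml φ0 φs}


namespace Stmt5Aux

variable {W : Type} {R : W → W → Prop} {V : ℕ → Set W}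

lemma sat_imp {x : W} {φ ψ : Fml} :
    sat R V x (φ.imp ψ) ↔ (sat R V x φ → sat R V x ψ) := by
  simp only [Fml.imp, sat]; tauto

lemma sat_dia {x : W} {φ : Fml} :
    sat R V x φ.dia ↔ ∃ y, R x y ∧ sat R V y φ := by
  simp only [Fml.dia, sat, not_forall]
  constructor
  · rintro ⟨y, hy⟩
    refine ⟨y, ?_, ?_⟩ <;> tauto
  · rintro ⟨y, h1, h2⟩
    exact ⟨y, by tauto⟩

lemma sat_conjNeg {x : W} {φ : Fml} {l : List Fml} :
    sat R V x (conjNeg φ l) ↔ ∀ ψ ∈ l, ¬ (sat R V x φ ∧ sat R V x ψ) := by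
  induction l with
  | nil => simp [conjNeg, sat]
  | cons ψ rest ih =>
    simp only [conjNeg, sat, ih, List.mem_cons]
    constructor
    · rintro ⟨h1, h2⟩ ψ' h'
      rcases h' with rfl | h'
      · exact h1
      · exact h2 _ h'
    · intro h
      exact ⟨h ψ (Or.inl rfl), fun ψ' h' => h ψ' (Or.inr h')⟩

lemma sat_Dfml {x : W} {l : List Fml} :
    sat R V x (Dfml l) ↔
      List.Pairwise (fun φ ψ => ¬ (sat R V x φ ∧ sat R V x ψ)) l := by
  induction l with
  | nil => simp [Dfml, sat]
  | cons φ rest ih =>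
    simp only [Dfml, sat, sat_conjNeg, ih, List.pairwise_cons]

lemma Dfml_pair {x : W} {l : List Fml} (h : sat R V x (Dfml l))
    {i j : ℕ} (hij : i < j) (hj : j < l.length) :
    ¬ (sat R V x (l.get ⟨i, hij.trans hj⟩) ∧ sat R V x (l.get ⟨j, hj⟩)) := by
  rw [sat_Dfml, List.pairwise_iff_get] at h
  exact h ⟨i, hij.trans hj⟩ ⟨j, hj⟩ hij

lemma Pfml_elim : ∀ (l : List Fml) (z : W) {φ0 : Fml}, sat R V z (Pfml φ0 l) →
    ∃ c : ℕ → W, c 0 = z ∧ (∀ i, i ≤ l.length → R (c i) (c (i+1))) ∧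
      (∀ i (h : i < l.length), sat R V (c (i+1)) (l.get ⟨i, h⟩)) ∧
      sat R V (c (l.length + 1)) φ0 := by
  intro l
  induction l with
  | nil =>
    intro z φ0 h
    obtain ⟨y, hy, hsy⟩ := sat_dia.mp h
    refine ⟨fun i => if i = 0 then z else y, rfl, ?_, ?_, ?_⟩
    · intro i hi
      simp only [List.length_nil, Nat.le_zero] at hi
      subst hi; simpa using hy
    · intro i hi; simp at hi
    · simpa using hsy
  | cons ψ rest ih =>
    intro z φ0 h
    obtain ⟨y, hy, hsψ, hsP⟩ := sat_dia.mp h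
    obtain ⟨c, hc0, hcR, hcsat, hclast⟩ := ih y hsP
    refine ⟨fun i => if i = 0 then z else c (i-1), rfl, ?_, ?_, ?_⟩
    · intro i hi
      match i with
      | 0 => simpa [hc0] using hy
      | Nat.succ j => simpa using hcR j (by simpa using hi)
    · intro i hi
      match i with
      | 0 => simpa [hc0] using hsψ
      | Nat.succ j => simpa using hcsat j (by simpa using hi)
    · simpa using hclast

lemma Pfml_intro : ∀ (l : List Fml) (z : W) {φ0 : Fml} (c : ℕ → W),
    c 0 = z → (∀ i, i ≤ l.length → R (c i) (c (i+1))) →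
    (∀ i (h : i < l.length), sat R V (c (i+1)) (l.get ⟨i, h⟩)) →
    sat R V (c (l.length + 1)) φ0 → sat R V z (Pfml φ0 l) := by
  intro l
  induction l with
  | nil =>
    intro z φ0 c hc0 hcR hcsat hclast
    exact sat_dia.mpr ⟨c 1, hc0 ▸ hcR 0 (by omega), hclast⟩
  | cons ψ rest ih =>
    intro z φ0 c hc0 hcR hcsat hclast
    refine sat_dia.mpr ⟨c 1, hc0 ▸ hcR 0 (by omega), ?_, ?_⟩
    · simpa using hcsat 0 (by simp)
    · exact ih (c 1) (fun i => c (i+1)) rfl (fun i hi => hcR (i+1) (by simpa using hi))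
        (fun i hi => by simpa using hcsat (i+1) (by simpa using hi)) (by simpa using hclast)

end Stmt5Aux

namespace Stmt5Aux
variable {W : Type} {R : W → W → Prop} {V : ℕ → Set W}
lemma sat_and {x : W} {φ ψ : Fml} : sat R V x (.and φ ψ) ↔ sat R V x φ ∧ sat R V x ψ := Iff.rfl
lemma sat_neg {x : W} {φ : Fml} : sat R V x (.neg φ) ↔ ¬ sat R V x φ := Iff.rfl
lemma sat_var {x : W} {p : ℕ} : sat R V x (.var p) ↔ x ∈ V p := Iff.rfl
end Stmt5Aux

open Stmt5Aux

/-- a transitive frame validates the scheme C_n iff it has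
circumference at most n and no strictly ascending chains. -/
theorem stmt5 {W : Type} (R : W → W → Prop) (hT : Transitive R) (n : ℕ) :
    ValidatesCn R n ↔ (CircumLE R n ∧ ¬ ∃ x : ℕ → W, StrictAscChain R x) := by
  constructor
  · intro hval
    constructor
    · -- circumference ≤ n
      intro k hcyc
      by_contra hk
      push_neg at hk
      obtain ⟨hk1, c, hinj, hstep⟩ := hcyc
      set Vc : ℕ → Set W := fun j => {w | ∃ m, m < k ∧ min m n = j ∧ w = c m} with hVc
      set φs : List Fml := (List.range n).map (fun i => Fml.var (i+1)) with hφs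
      have hlen : φs.length = n := by simp [hφs]
      have Fget : ∀ (i : ℕ) (h : i < (Fml.var 0 :: φs).length),
          (Fml.var 0 :: φs).get ⟨i, h⟩ = Fml.var i := by
        intro i h
        match i with
        | 0 => rfl
        | Nat.succ j => simp [hφs]
      have hdisj : ∀ w, sat R Vc w (Dfml (Fml.var 0 :: φs)) := by
        intro w
        rw [sat_Dfml, List.pairwise_iff_get]
        intro a b hab
        rw [Fget a a.2, Fget b b.2]
        rintro ⟨⟨m, hm, hmin, rfl⟩, ⟨m', hm', hmin', he⟩⟩
        have : m = m' := hinj m m' hm hm' he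
        omega
      have hstep' : R (c (k-1)) (c 0) := by
        have h := hstep (k-1) (by omega)
        rwa [Nat.sub_add_cancel hk1, Nat.mod_self] at h
      have hC := hval Vc (c (k-1)) (Fml.var 0) φs hlen
      simp only [Cfml, sat_imp, sat_dia, sat_and, sat_neg] at hC
      have h1 : sat R Vc (c (k-1)) ((Dfml (Fml.var 0 :: φs)).boxs) :=
        ⟨hdisj _, fun y _ => hdisj y⟩
      have h2 : ∃ y, R (c (k-1)) y ∧ sat R Vc y (Fml.var 0) :=
        ⟨c 0, hstep', ⟨0, by omega, by omega, rfl⟩⟩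
      obtain ⟨y, hxy, hyφ, hyP⟩ := hC h1 h2
      obtain ⟨m, hmk, hmin, rfl⟩ := hyφ
      apply hyP
      rcases Nat.eq_zero_or_pos n with hn | hn
      · -- n = 0 : φs = []
        refine Pfml_intro φs (c m) (fun i => if i = 0 then c m else c ((m+1) % k))
          rfl ?_ ?_ ?_
        · intro i hi
          rw [hlen, hn] at hi
          simp only [Nat.le_zero] at hi
          subst hi
          simpa using hstep m hmk
        · intro i hi; rw [hlen, hn] at hi; omega
        · rw [hlen, hn]
          have : (m+1) % k < k := Nat.mod_lt _ (by omega)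
          exact (show sat R Vc _ (Fml.var 0) from ⟨(m+1) % k, this, by omega, by simp⟩)
      · -- n ≥ 1, so m = 0
        have hm0 : m = 0 := by omega
        subst hm0
        have hdown : ∀ t, t < k → R (c (k - 1 - t)) (c 0) := by
          intro t
          induction t with
          | zero => intro _; simpa using hstep'
          | succ t ih =>
            intro ht
            have h1 : R (c (k-1-(t+1))) (c (k-1-t)) := by
              have h := hstep (k-1-(t+1)) (by omega)
              rwa [show (k-1-(t+1)+1) = k-1-t by omega, Nat.mod_eq_of_lt (by omega)] at h
            exact hT h1 (ih (by omega))
        have hcn0 : R (c n) (c 0) := by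
          have h := hdown (k-1-n) (by omega)
          rwa [show k-1-(k-1-n) = n by omega] at h
        refine Pfml_intro φs (c 0) (fun i => if i ≤ n then c i else c 0)
          (by simp) ?_ ?_ ?_
        · intro i hi
          rw [hlen] at hi
          show R (if i ≤ n then c i else c 0) (if i+1 ≤ n then c (i+1) else c 0)
          rcases Nat.lt_or_ge i n with h | h
          · rw [if_pos (by omega : i ≤ n), if_pos (by omega : i+1 ≤ n)]
            have h' := hstep i (by omega)
            rwa [Nat.mod_eq_of_lt (by omega)] at h'
          · rw [if_pos (by omega : i ≤ n), if_neg (by omega : ¬ (i+1 ≤ n)),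
              show i = n by omega]
            exact hcn0
        · intro i hi
          rw [hlen] at hi
          have hg : φs.get ⟨i, by omega⟩ = Fml.var (i+1) := by simp [hφs]
          rw [hg]
          simp only [show i + 1 ≤ n by omega, if_pos]
          exact (show sat R Vc _ (Fml.var (i+1)) from ⟨i+1, by omega, by omega, rfl⟩)
        · rw [hlen]
          simp only [show ¬ (n+1 ≤ n) by omega, if_neg, not_false_iff]
          exact (show sat R Vc _ (Fml.var 0) from ⟨0, by omega, by omega, rfl⟩)
    · -- no strictly ascending chains
      rintro ⟨g, hasc, hstrict⟩
      have hRlt : ∀ a b, a < b → R (g a) (g b) := by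
        intro a b hab
        induction b with
        | zero => omega
        | succ b ih =>
          rcases Nat.lt_succ_iff_lt_or_eq.mp hab with h | h
          · exact hT (ih h) (hasc b)
          · subst h; exact hasc a
      have hne : ∀ a b, a < b → g a ≠ g b := by
        intro a b hab heq
        rcases Nat.lt_or_ge (a+1) b with h | h
        · exact hstrict a (by rw [heq]; exact hRlt (a+1) b h)
        · have hb : b = a+1 := by omega
          subst hb
          refine hstrict a ?_
          rw [heq]
          have h2 := hasc a
          rwa [heq] at h2
      set Vc : ℕ → Set W := fun j => {w | ∃ m, m % (n+1) = j ∧ w = g m} with hVc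
      set φs : List Fml := (List.range n).map (fun i => Fml.var (i+1)) with hφs
      have hlen : φs.length = n := by simp [hφs]
      have Fget : ∀ (i : ℕ) (h : i < (Fml.var 0 :: φs).length),
          (Fml.var 0 :: φs).get ⟨i, h⟩ = Fml.var i := by
        intro i h
        match i with
        | 0 => rfl
        | Nat.succ j => simp [hφs]
      have hdisj : ∀ w, sat R Vc w (Dfml (Fml.var 0 :: φs)) := by
        intro w
        rw [sat_Dfml, List.pairwise_iff_get]
        intro a b hab
        rw [Fget a a.2, Fget b b.2]
        rintro ⟨⟨m, hm, rfl⟩, ⟨m', hm', he⟩⟩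
        have hmm : m ≠ m' := fun hduh => by rw [hduh] at hm; omega
        rcases Nat.lt_or_ge m m' with h | h
        · exact hne m m' h he
        · exact hne m' m (by omega) he.symm
      have hC := hval Vc (g 0) (Fml.var 0) φs hlen
      simp only [Cfml, sat_imp, sat_dia, sat_and, sat_neg] at hC
      have h1 : sat R Vc (g 0) ((Dfml (Fml.var 0 :: φs)).boxs) :=
        ⟨hdisj _, fun y _ => hdisj y⟩
      have h2 : ∃ y, R (g 0) y ∧ sat R Vc y (Fml.var 0) :=
        ⟨g (n+1), hRlt 0 (n+1) (by omega), ⟨n+1, Nat.mod_self _, rfl⟩⟩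
      obtain ⟨y, hxy, hyφ, hyP⟩ := hC h1 h2
      obtain ⟨m, hm0, rfl⟩ := hyφ
      obtain ⟨q, hq⟩ := Nat.dvd_of_mod_eq_zero hm0
      apply hyP
      refine Pfml_intro φs (g m) (fun i => g (m + i)) (by simp) ?_ ?_ ?_
      · intro i _
        have := hasc (m + i)
        simpa [Nat.add_assoc] using this
      · intro i hi
        rw [hlen] at hi
        have hg : φs.get ⟨i, by omega⟩ = Fml.var (i+1) := by simp [hφs]
        rw [hg]
        refine (show sat R Vc _ (Fml.var (i+1)) from ⟨m + (i+1), ?_, rfl⟩)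
        rw [hq, Nat.mul_add_mod, Nat.mod_eq_of_lt (by omega)]
      · rw [hlen]
        refine (show sat R Vc _ (Fml.var 0) from ⟨m + (n+1), ?_, rfl⟩)
        rw [Nat.add_mod_right, hm0]
  · rintro ⟨hcirc, hnochain⟩ V x φ0 φs hlen
    simp only [Cfml, sat_imp, sat_dia, sat_and, sat_neg]
    intro hD hdia
    obtain ⟨hD1, hD2⟩ := hD
    obtain ⟨y0, hxy0, hy0φ⟩ := hdia
    by_contra hcon
    push_neg at hcon
    set N := φs.length with hN
    set F : List Fml := φ0 :: φs with hF
    have hFlen : F.length = N + 1 := by simp [hF, hN]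
    have step : ∀ z, R x z → sat R V z φ0 →
        ∃ z', R x z' ∧ sat R V z' φ0 ∧ R z z' ∧ ¬ R z' z := by
      intro z hxz hz
      have hp := hcon z hxz hz
      obtain ⟨c, hc0, hcR, hcsat, hclast⟩ := Pfml_elim φs z hp
      have hsucc : ∀ i, i ≤ N+1 → R x (c i) := by
        intro i
        induction i with
        | zero => intro _; rw [hc0]; exact hxz
        | succ s ih => intro h; exact hT (ih (by omega)) (hcR s (by omega))
      have hDat : ∀ i, i ≤ N+1 → sat R V (c i) (Dfml F) := by
        intro i hi
        exact hD2 _ (hsucc i hi)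
      have lab : ∀ i (h : i < N + 1), sat R V (c i) (F.get ⟨i, by rw [hFlen]; omega⟩) := by
        intro i h
        match i with
        | 0 => rw [hc0]; exact hz
        | Nat.succ s =>
          have := hcsat s (by omega)
          simpa [hF] using this
      have hdist : ∀ i j, i < j → j ≤ N → c i ≠ c j := by
        intro i j hij hj heq'
        refine Dfml_pair (l := F) (hDat i (by omega)) hij (by rw [hFlen]; omega)
          ⟨lab i (by omega), ?_⟩
        rw [heq']
        exact lab j (by omega)
      have hdist2 : ∀ j, 1 ≤ j → j ≤ N → c (N+1) ≠ c j := by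
        intro j h1 hj heq'
        refine Dfml_pair (l := F) (hDat j (by omega)) (show 0 < j from h1) (by rw [hFlen]; omega)
          ⟨?_, lab j (by omega)⟩
        rw [← heq']
        exact (show sat R V (c (N+1)) (F.get ⟨0, by rw [hFlen]; omega⟩) from hclast)
      have hchain : ∀ j, 1 ≤ j → j ≤ N+1 → R (c 0) (c j) := by
        intro j
        induction j with
        | zero => omega
        | succ s ih =>
          intro _ h
          rcases Nat.eq_zero_or_pos s with rfl | hs
          · exact hcR 0 (by omega)
          · exact hT (ih hs (by omega)) (hcR s (by omega))
      have hnR : ¬ R (c (N+1)) (c 0) := by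
        intro hback
        by_cases heqz : c (N+1) = c 0
        · have hcy : HasCycle R (N+1) := by
            refine ⟨by omega, c, ?_, ?_⟩
            · intro i j hi hj hij
              by_contra hnij
              rcases Nat.lt_or_ge i j with h | h
              · exact hdist i j h (by omega) hij
              · exact hdist j i (by omega) (by omega) hij.symm
            · intro i hi
              rcases Nat.lt_or_ge (i+1) (N+1) with h | h
              · rw [Nat.mod_eq_of_lt h]; exact hcR i (by omega)
              · have hiN : i = N := by omega
                subst hiN
                rw [Nat.mod_self, ← heqz]
                exact hcR _ (by omega)
          have := hcirc _ hcy
          omega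
        · have hdall : ∀ i j, i < j → j ≤ N+1 → c i ≠ c j := by
            intro i j hij hj
            rcases Nat.lt_or_ge j (N+1) with h | h
            · exact hdist i j hij (by omega)
            · have hjN : j = N+1 := by omega
              subst hjN
              rcases Nat.eq_zero_or_pos i with rfl | hi
              · exact fun h' => heqz h'.symm
              · exact fun h' => hdist2 i hi (by omega) h'.symm
          have hcy : HasCycle R (N+2) := by
            refine ⟨by omega, c, ?_, ?_⟩
            · intro i j hi hj hij
              by_contra hnij
              rcases Nat.lt_or_ge i j with h | h
              · exact hdall i j h (by omega) hij
              · exact hdall j i (by omega) (by omega) hij.symm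
            · intro i hi
              rcases Nat.lt_or_ge (i+1) (N+2) with h | h
              · rw [Nat.mod_eq_of_lt h]
                rcases Nat.lt_or_ge i (N+1) with h' | h'
                · exact hcR i (by omega)
                · have hiN : i = N+1 := by omega
                  subst hiN
                  omega
              · have hiN : i = N+1 := by omega
                subst hiN
                rw [Nat.mod_self]
                exact hback
          have := hcirc _ hcy
          omega
      refine ⟨c (N+1), hsucc _ le_rfl, hclast, ?_, ?_⟩
      · have h := hchain (N+1) (by omega) le_rfl
        rwa [hc0] at h
      · rw [← hc0]
        exact hnR
    have stepT : ∀ t : {z : W // R x z ∧ sat R V z φ0},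
        ∃ t' : {z : W // R x z ∧ sat R V z φ0}, R t.1 t'.1 ∧ ¬ R t'.1 t.1 := by
      rintro ⟨z, hz1, hz2⟩
      obtain ⟨z', h1, h2, h3, h4⟩ := step z hz1 hz2
      exact ⟨⟨z', h1, h2⟩, h3, h4⟩
    choose f hf1 hf2 using stepT
    set g : ℕ → {z : W // R x z ∧ sat R V z φ0} :=
      fun m => f^[m] ⟨y0, hxy0, hy0φ⟩ with hg
    refine hnochain ⟨fun m => (g m).1, ?_, ?_⟩
    · intro m
      show R (g m).1 (g (m+1)).1
      have h : g (m+1) = f (g m) := Function.iterate_succ_apply' f m _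
      rw [h]
      exact hf1 (g m)
    · intro m
      show ¬ R (g (m+1)).1 (g m).1
      have h : g (m+1) = f (g m) := Function.iterate_succ_apply' f m _
      rw [h]
      exact hf2 (g m)
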